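/- For x, y, z in Q_{n-1}, the associator in Q_n satisfies [(x,1),(y,1),(z,1)] = [x,y]·[x,z]·[y,z]·[z,x,y]·[x,z,y]. -/

import Mathlib

/-- The underlying set of the Cayley-Dickson loop `Q n`:
`Q 0 = {±1}` (encoded as `Bool`, `false = 1`, `true = -1`) and `Q (n+1) = Q n × Bool`,
an element `(x, b)` encoding `(x, 0)` if `b = false` and `(x, 1)` if `b = true`. -/
def Q : ℕ → Type
  | 0 => Bool
  | n+1 => Q n × Bool

namespace Q

def one : ∀ n, Q n
  | 0 => false
  | n+1 => (one n, false)

def neg : ∀ n, Q n → Q n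
  | 0, x => !x
  | n+1, (x, b) => (neg n x, b)

def conj : ∀ n, Q n → Q n
  | 0, x => x
  | n+1, (x, false) => (conj n x, false)
  | n+1, (x, true) => (neg n x, true)

/-- Cayley-Dickson doubling multiplication restricted to the loop:
`(x,0)(y,0) = (xy,0)`, `(x,0)(y,1) = (yx,1)`, `(x,1)(y,0) = (xy*,1)`, `(x,1)(y,1) = (-y*x,0)`. -/
def mul : ∀ n, Q n → Q n → Q n
  | 0, x, y => xor x y
  | n+1, (x, false), (y, false) => (mul n x y, false)
  | n+1, (x, false), (y, true)  => (mul n y x, true)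
  | n+1, (x, true),  (y, false) => (mul n x (conj n y), true)
  | n+1, (x, true),  (y, true)  => (neg n (mul n (conj n y) x), false)

instance (n : ℕ) : One (Q n) := ⟨one n⟩
instance (n : ℕ) : Neg (Q n) := ⟨neg n⟩
instance (n : ℕ) : Mul (Q n) := ⟨mul n⟩
instance (n : ℕ) : Star (Q n) := ⟨conj n⟩
/-- In `Q n` the inverse of `x` is its conjugate `x*`. -/
instance (n : ℕ) : Inv (Q n) := ⟨conj n⟩

instance instDecEq : ∀ n, DecidableEq (Q n)
  | 0 => inferInstanceAs (DecidableEq Bool)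
  | n+1 => letI := instDecEq n; inferInstanceAs (DecidableEq (Q n × Bool))

instance instFintype : ∀ n, Fintype (Q n)
  | 0 => inferInstanceAs (Fintype Bool)
  | n+1 => letI := instFintype n; inferInstanceAs (Fintype (Q n × Bool))

/-- Powers in `Q n` (well defined by diassociativity). -/
def pow {n : ℕ} (x : Q n) : ℕ → Q n
  | 0 => 1
  | k+1 => x * pow x k

/-- The embedding `x ↦ (x, 0)` of `Q n` into `Q (n+1)`. -/
def up {n : ℕ} (x : Q n) : Q (n+1) := (x, false)

/-- The map `x ↦ (x, 1)` from `Q n` into `Q (n+1)`. -/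
def up1 {n : ℕ} (x : Q n) : Q (n+1) := (x, true)

/-- The commutator `[x,y]`, defined by `xy = (yx)[x,y]`. -/
def comm {n : ℕ} (x y : Q n) : Q n := (y * x)⁻¹ * (x * y)

/-- The associator `[x,y,z]`, defined by `(xy)z = (x(yz))[x,y,z]`. -/
def assoc {n : ℕ} (x y z : Q n) : Q n := (x * (y * z))⁻¹ * ((x * y) * z)

/-- A subloop of the Cayley-Dickson loop `Q n`: a subset containing `1` and closed
under multiplication and inverses (= conjugates). -/
structure Subloop (n : ℕ) where
  carrier : Set (Q n)
  one_mem : (1 : Q n) ∈ carrier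
  mul_mem : ∀ ⦃x y : Q n⦄, x ∈ carrier → y ∈ carrier → x * y ∈ carrier
  inv_mem : ∀ ⦃x : Q n⦄, x ∈ carrier → x⁻¹ ∈ carrier

/-- The subloop of `Q n` generated by a set `s`. -/
def closure (n : ℕ) (s : Set (Q n)) : Set (Q n) :=
  ⋂₀ {t : Set (Q n) | s ⊆ t ∧ (1 : Q n) ∈ t ∧
      (∀ x ∈ t, ∀ y ∈ t, x * y ∈ t) ∧ (∀ x ∈ t, x⁻¹ ∈ t)}

end Q

namespace Q

theorem mul_def {n} (x y : Q n) : x * y = mul n x y := rfl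
theorem inv_def {n} (x : Q n) : x⁻¹ = conj n x := rfl
theorem one_def {n} : (1 : Q n) = one n := rfl

theorem neg_neg : ∀ n (x : Q n), neg n (neg n x) = x
  | 0, x => by cases x <;> rfl
  | n+1, (x, b) => by simp [neg, neg_neg n x] <;> rfl

theorem conj_neg : ∀ n (x : Q n), conj n (neg n x) = neg n (conj n x)
  | 0, x => by simp [neg, conj] <;> rfl
  | n+1, (x, false) => by simp [neg, conj, conj_neg n x] <;> rfl
  | n+1, (x, true) => by simp [neg, conj] <;> rfl

theorem conj_conj : ∀ n (x : Q n), conj n (conj n x) = x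
  | 0, x => by simp [conj]
  | n+1, (x, false) => by simp [conj, conj_conj n x] <;> rfl
  | n+1, (x, true) => by simp [conj, neg_neg] <;> rfl

theorem neg_mul_both : ∀ n (x y : Q n),
    mul n (neg n x) y = neg n (mul n x y) ∧ mul n x (neg n y) = neg n (mul n x y)
  | 0, x, y => by constructor <;> cases x <;> cases y <;> rfl
  | n+1, (x, a), (y, b) => by
    have h1 : ∀ x y : Q n, mul n (neg n x) y = neg n (mul n x y) := fun x y => (neg_mul_both n x y).1
    have h2 : ∀ x y : Q n, mul n x (neg n y) = neg n (mul n x y) := fun x y => (neg_mul_both n x y).2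
    cases a <;> cases b <;>
      constructor <;> simp [mul, neg, conj_neg, h1, h2, neg_neg] <;> rfl

theorem neg_mul (n) (x y : Q n) : mul n (neg n x) y = neg n (mul n x y) := (neg_mul_both n x y).1
theorem mul_neg (n) (x y : Q n) : mul n x (neg n y) = neg n (mul n x y) := (neg_mul_both n x y).2

theorem conj_one : ∀ n, conj n (one n) = one n
  | 0 => rfl
  | n+1 => by simp [conj, one, conj_one n] <;> rfl

theorem one_mul_both : ∀ n (x : Q n), mul n (one n) x = x ∧ mul n x (one n) = x
  | 0, x => by cases x <;> exact ⟨rfl, rfl⟩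
  | n+1, (x, b) => by
    have h1 : ∀ x : Q n, mul n (one n) x = x := fun x => (one_mul_both n x).1
    have h2 : ∀ x : Q n, mul n x (one n) = x := fun x => (one_mul_both n x).2
    cases b <;> constructor <;> simp [mul, one, conj_one, h1, h2] <;> rfl

theorem one_mul' (n) (x : Q n) : mul n (one n) x = x := (one_mul_both n x).1
theorem mul_one' (n) (x : Q n) : mul n x (one n) = x := (one_mul_both n x).2

theorem conj_mul : ∀ n (x y : Q n), conj n (mul n x y) = mul n (conj n y) (conj n x)
  | 0, x, y => by cases x <;> cases y <;> rfl
  | n+1, (x, a), (y, b) => by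
    have ih : ∀ x y : Q n, conj n (mul n x y) = mul n (conj n y) (conj n x) := conj_mul n
    cases a <;> cases b <;>
      simp [mul, conj, ih, conj_conj, conj_neg, neg_mul, mul_neg, neg_neg] <;> rfl

theorem mul_conj_both : ∀ n (x : Q n),
    mul n x (conj n x) = one n ∧ mul n (conj n x) x = one n
  | 0, x => by cases x <;> exact ⟨rfl, rfl⟩
  | n+1, (x, b) => by
    have h1 : ∀ x : Q n, mul n x (conj n x) = one n := fun x => (mul_conj_both n x).1
    have h2 : ∀ x : Q n, mul n (conj n x) x = one n := fun x => (mul_conj_both n x).2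
    cases b <;> constructor <;>
      simp [mul, conj, one, conj_neg, neg_mul, mul_neg, neg_neg, h1, h2] <;> rfl

theorem conj_or : ∀ n (x : Q n), conj n x = x ∨ conj n x = neg n x
  | 0, x => Or.inl rfl
  | n+1, (x, false) => by
    rcases conj_or n x with h | h
    · exact Or.inl (by simp [conj, neg, h] <;> rfl)
    · exact Or.inr (by simp [conj, neg, h] <;> rfl)
  | n+1, (x, true) => Or.inr (by simp [conj, neg] <;> rfl)


theorem mul_ff (n) (x y : Q n) :
    mul (n+1) (x, false) (y, false) = (mul n x y, false) := rfl
theorem mul_ft (n) (x y : Q n) :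
    mul (n+1) (x, false) (y, true) = (mul n y x, true) := rfl
theorem mul_tf (n) (x y : Q n) :
    mul (n+1) (x, true) (y, false) = (mul n x (conj n y), true) := rfl
theorem mul_tt (n) (x y : Q n) :
    mul (n+1) (x, true) (y, true) = (neg n (mul n (conj n y) x), false) := rfl
theorem conj_f (n) (x : Q n) : conj (n+1) (x, false) = (conj n x, false) := rfl
theorem xor_cancel (a b : Bool) : (a ^^ (a ^^ b)) = b := by revert a b; decide
theorem xor_notl (a b : Bool) : ((!a) ^^ b) = !(a ^^ b) := by revert a b; decide
theorem xor_notr (a b : Bool) : (a ^^ (!b)) = !(a ^^ b) := by revert a b; decide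
theorem not_eq_not {a b : Bool} : (!a) = (!b) ↔ a = b := by revert a b; decide

theorem pair_eq (n : ℕ) {a b : Q n} {c d : Bool} (h1 : a = b) (h2 : c = d) :
    ((a, c) : Q (n+1)) = (b, d) := by cases h1; cases h2; rfl
theorem conj_t (n) (x : Q n) : conj (n+1) (x, true) = (neg n x, true) := rfl

/-! ### sign, abs, bitwise xor -/

def sg : ∀ n, Q n → Bool
  | 0, x => x
  | n+1, (x, _) => sg n x

def ab : ∀ n, Q n → Q n
  | 0, _ => false
  | n+1, (x, b) => (ab n x, b)

def bx : ∀ n, Q n → Q n → Q n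
  | 0, x, y => xor x y
  | n+1, (x, a), (y, b) => (bx n x y, xor a b)

theorem sg_neg : ∀ n (x : Q n), sg n (neg n x) = !(sg n x)
  | 0, x => by simp [sg, neg]
  | n+1, (x, b) => by simp [sg, neg, sg_neg n x]

theorem sg_one : ∀ n, sg n (one n) = false
  | 0 => rfl
  | n+1 => by simp [sg, one, sg_one n]

theorem sg_ab : ∀ n (x : Q n), sg n (ab n x) = false
  | 0, x => rfl
  | n+1, (x, b) => by simp [sg, ab, sg_ab n x]

theorem ab_neg : ∀ n (x : Q n), ab n (neg n x) = ab n x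
  | 0, x => rfl
  | n+1, (x, b) => by simp [ab, neg, ab_neg n x] <;> rfl

theorem ab_conj : ∀ n (x : Q n), ab n (conj n x) = ab n x
  | 0, x => rfl
  | n+1, (x, false) => by simp [ab, conj, ab_conj n x] <;> rfl
  | n+1, (x, true) => by simp [ab, conj, ab_neg] <;> rfl

theorem ab_one : ∀ n, ab n (one n) = one n
  | 0 => rfl
  | n+1 => by simp [ab, one, ab_one n] <;> rfl

theorem ab_ab : ∀ n (x : Q n), ab n (ab n x) = ab n x
  | 0, x => rfl
  | n+1, (x, b) => by simp [ab, ab_ab n x] <;> rfl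

theorem bx_comm : ∀ n (x y : Q n), bx n x y = bx n y x
  | 0, x, y => Bool.xor_comm x y
  | n+1, (x, a), (y, b) => by simp [bx, bx_comm n x y, Bool.xor_comm] <;> rfl

theorem bx_assoc : ∀ n (x y z : Q n), bx n (bx n x y) z = bx n x (bx n y z)
  | 0, x, y, z => Bool.xor_assoc x y z
  | n+1, (x, a), (y, b), (z, c) => by simp [bx, bx_assoc n x y z, Bool.xor_assoc] <;> rfl

theorem bx_self : ∀ n (x : Q n), bx n x x = one n
  | 0, x => Bool.xor_self x
  | n+1, (x, a) => by simp [bx, one, bx_self n x] <;> rfl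

theorem bx_one_left : ∀ n (x : Q n), bx n (one n) x = x
  | 0, x => by cases x <;> rfl
  | n+1, (x, a) => by simp [bx, one, bx_one_left n x] <;> rfl

theorem bx_one_right (n) (x : Q n) : bx n x (one n) = x := by
  rw [bx_comm, bx_one_left]

theorem bx_left_comm (n) (x y z : Q n) : bx n x (bx n y z) = bx n y (bx n x z) := by
  rw [← bx_assoc, bx_comm n x y, bx_assoc]

theorem bx_self_left (n) (x y : Q n) : bx n x (bx n x y) = y := by
  rw [← bx_assoc, bx_self, bx_one_left]

theorem ab_bx : ∀ n (x y : Q n), ab n (bx n x y) = bx n (ab n x) (ab n y)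
  | 0, x, y => by simp [ab, bx] <;> rfl
  | n+1, (x, a), (y, b) => by simp [ab, bx, ab_bx n x y] <;> rfl

theorem ab_mul : ∀ n (x y : Q n), ab n (mul n x y) = bx n (ab n x) (ab n y)
  | 0, x, y => rfl
  | n+1, (x, a), (y, b) => by
    have ih := ab_mul n
    cases a <;> cases b <;>
      simp [ab, mul, bx, ih, ab_conj, ab_neg, bx_comm n (ab n y) (ab n x)] <;> rfl

theorem rep : ∀ n (x : Q n), x = ab n x ∨ x = neg n (ab n x)
  | 0, x => by cases x <;> simp [ab, neg] <;> rfl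
  | n+1, (x, b) => by
    rcases rep n x with h | h
    · exact Or.inl (by simp [ab, neg, ← h] <;> rfl)
    · exact Or.inr (by simp [ab, neg, ← h] <;> rfl)

theorem ext_sg_ab : ∀ n (x y : Q n), sg n x = sg n y → ab n x = ab n y → x = y
  | 0, x, y, h, _ => h
  | n+1, (x, a), (y, b), h, h' => by
    simp only [ab] at h'
    simp only [sg] at h
    cases (show a = b from congrArg Prod.snd h')
    rw [ext_sg_ab n x y h (congrArg Prod.fst h')]

/-! ### twist functions -/

def sg2 {n : ℕ} (u v : Q n) : Bool := xor (sg n (mul n u v)) (xor (sg n u) (sg n v))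

def g2 {n : ℕ} (u : Q n) : Bool := xor (sg n (conj n u)) (sg n u)

theorem sg_mul (n) (x y : Q n) :
    sg n (mul n x y) = xor (xor (sg n x) (sg n y)) (sg2 (ab n x) (ab n y)) := by
  obtain hx | hx := rep n x <;> obtain hy | hy := rep n y <;> rw [hx, hy] <;>
    simp [sg2, ab_ab, ab_neg, sg_ab, sg_neg, neg_mul, mul_neg, neg_neg]

theorem sg_conj (n) (x : Q n) :
    sg n (conj n x) = xor (sg n x) (g2 (ab n x)) := by
  obtain hx | hx := rep n x <;> rw [hx] <;>
    simp [g2, ab_ab, ab_neg, sg_ab, sg_neg, conj_neg]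

theorem g2_one (n) : g2 (one n) = false := by simp [g2, conj_one, sg_one]

theorem sg2_one_left (n) (v : Q n) : sg2 (one n) v = false := by
  simp [sg2, one_mul', sg_one]

theorem sg2_one_right (n) (v : Q n) : sg2 v (one n) = false := by
  simp [sg2, mul_one', sg_one]

theorem sg2_self (n) (u : Q n) : sg2 u u = g2 u := by
  obtain h | h := conj_or n u
  · have hm : mul n u u = one n := by
      conv_lhs => rw [show mul n u u = mul n u (conj n u) by rw [h]]
      exact (mul_conj_both n u).1
    simp [sg2, g2, hm, sg_one, h]
  · have hm : mul n u u = neg n (one n) := by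
      conv_lhs => rw [show mul n u u = mul n u (neg n (conj n u)) by rw [h, neg_neg]]
      rw [mul_neg, (mul_conj_both n u).1]
    simp [sg2, g2, hm, sg_one, sg_neg, h]

theorem g2_ab (n) (u : Q n) : g2 (ab n u) = g2 u := by
  obtain h | h := rep n u
  · rw [← h]
  · rw [h]; simp [g2, ab_neg, ab_ab, conj_neg, sg_neg]

theorem sg2_ab_left (n) (u v : Q n) : sg2 (ab n u) v = sg2 u v := by
  obtain h | h := rep n u
  · rw [← h]
  · rw [h]; simp [sg2, ab_neg, ab_ab, neg_mul, sg_neg]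

theorem sg2_ab_right (n) (u v : Q n) : sg2 u (ab n v) = sg2 u v := by
  obtain h | h := rep n v
  · rw [← h]
  · rw [h]; simp [sg2, ab_neg, ab_ab, mul_neg, sg_neg]

theorem sg2_swap (n) (u v : Q n) :
    sg2 v u = xor (xor (sg2 u v) (xor (g2 u) (g2 v))) (g2 (bx n u v)) := by
  have h := congrArg (sg n) (conj_mul n u v)
  rw [sg_conj, sg_mul, sg_mul, sg_conj, sg_conj, ab_mul, ab_conj, ab_conj,
    ← ab_bx] at h
  simp only [sg2_ab_left, sg2_ab_right, g2_ab] at h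
  revert h
  generalize sg2 u v = A
  generalize sg2 v u = B
  generalize g2 u = C
  generalize g2 v = D
  generalize g2 (bx n u v) = E
  generalize sg n u = s
  generalize sg n v = t
  revert A B C D E s t
  decide


theorem ab_comm (n) (x y : Q n) : ab n (comm x y) = one n := by
  simp only [comm, mul_def, inv_def, ab_mul, ab_conj, ab_bx, ab_ab]
  simp only [bx_assoc, bx_comm, bx_left_comm, bx_self, bx_self_left, bx_one_left, bx_one_right]

theorem ab_assoc (n) (x y z : Q n) : ab n (assoc x y z) = one n := by
  simp only [assoc, mul_def, inv_def, ab_mul, ab_conj, ab_bx, ab_ab]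
  simp only [bx_assoc, bx_comm, bx_left_comm, bx_self, bx_self_left, bx_one_left, bx_one_right]

theorem sg_comm (n) (x y : Q n) :
    sg n (comm x y) = xor (sg2 (ab n x) (ab n y)) (sg2 (ab n y) (ab n x)) := by
  simp only [comm, mul_def, inv_def, sg_mul, sg_conj, ab_mul, ab_conj, ab_ab, ab_bx]
  simp only [bx_assoc, bx_comm, bx_left_comm, bx_self, bx_self_left, bx_one_left, bx_one_right]
  simp only [sg2_self, sg2_one_left, sg2_one_right, g2_one]
  simp only [Bool.xor_assoc, Bool.xor_comm, Bool.xor_left_comm, Bool.xor_self,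
    Bool.xor_false, Bool.false_xor, Q.xor_cancel]

theorem sg_assoc (n) (x y z : Q n) :
    sg n (assoc x y z) =
      xor (sg2 (ab n y) (ab n z))
        (xor (sg2 (ab n x) (bx n (ab n y) (ab n z)))
          (xor (sg2 (ab n x) (ab n y)) (sg2 (bx n (ab n x) (ab n y)) (ab n z)))) := by
  simp only [assoc, mul_def, inv_def, sg_mul, sg_conj, ab_mul, ab_conj, ab_ab, ab_bx]
  simp only [bx_assoc, bx_comm, bx_left_comm, bx_self, bx_self_left, bx_one_left, bx_one_right]
  simp only [sg2_self, sg2_one_left, sg2_one_right, g2_one]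
  simp only [Bool.xor_assoc, Bool.xor_comm, Bool.xor_left_comm, Bool.xor_self,
    Bool.xor_false, Bool.false_xor, Q.xor_cancel]


end Q


set_option maxHeartbeats 4000000 in
/-- For `x, y, z ∈ Q n`, the associator in `Q (n+1)` satisfies
`[(x,1),(y,1),(z,1)] = [x,y]·[x,z]·[y,z]·[z,x,y]·[x,z,y]`. -/
theorem Q.assoc_up1_up1_up1 (n : ℕ) (x y z : Q n) :
    Q.assoc (Q.up1 x) (Q.up1 y) (Q.up1 z) =
      Q.up ((((Q.comm x y * Q.comm x z) * Q.comm y z) * Q.assoc z x y) * Q.assoc x z y) := by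
  have key : Q.assoc (Q.up1 x) (Q.up1 y) (Q.up1 z)
      = Q.up (Q.neg n (Q.mul n (Q.conj n (Q.mul n z (Q.neg n (Q.mul n (Q.conj n y) x))))
          (Q.neg n (Q.mul n x (Q.conj n (Q.neg n (Q.mul n (Q.conj n z) y))))))) := rfl
  rw [key]
  simp only [Q.up]
  refine Q.pair_eq n ?_ rfl
  apply Q.ext_sg_ab
  · simp only [Q.comm, Q.assoc, Q.mul_def, Q.inv_def]
    simp only [Q.mul_def, Q.sg_mul, Q.sg_conj, Q.sg_neg, Q.sg_comm, Q.sg_assoc,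
      Q.ab_mul, Q.ab_conj, Q.ab_neg, Q.ab_ab, Q.ab_bx, Q.ab_one, Q.ab_comm, Q.ab_assoc]
    simp only [Q.bx_assoc, Q.bx_comm, Q.bx_left_comm, Q.bx_self, Q.bx_self_left,
      Q.bx_one_left, Q.bx_one_right]
    simp only [Q.sg2_self, Q.sg2_one_left, Q.sg2_one_right, Q.g2_one]
    simp only [Q.xor_notl, Q.xor_notr, Q.not_eq_not, Bool.not_not,
      Bool.xor_assoc, Bool.xor_comm, Bool.xor_left_comm, Bool.xor_self,
      Bool.xor_false, Bool.false_xor, Q.xor_cancel]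
    rw [Q.sg2_swap n (Q.ab n y) (Q.ab n z)]
    simp only [Q.bx_assoc, Q.bx_comm, Q.bx_left_comm, Q.bx_self, Q.bx_self_left,
      Q.bx_one_left, Q.bx_one_right, Q.g2_one,
      Bool.xor_assoc, Bool.xor_comm, Bool.xor_left_comm, Bool.xor_self,
      Bool.xor_false, Bool.false_xor, Q.xor_cancel]
  · simp only [Q.mul_def, Q.ab_mul, Q.ab_comm, Q.ab_assoc, Q.ab_neg, Q.ab_conj, Q.ab_ab,
      Q.ab_bx, Q.ab_one]
    simp only [Q.bx_assoc, Q.bx_comm, Q.bx_left_comm, Q.bx_self, Q.bx_self_left,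
      Q.bx_one_left, Q.bx_one_right]
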